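/- Let G, H₁, H₂ be additive commutative groups, and let η₁ : G →+ H₁ and η₂ : G →+ H₂ be additive group homomorphisms such that the kernel of η₁ is contained in the kernel of η₂. Let M be an m×k matrix with entries in AddMonoidAlgebra (ZMod 2) G, and for i = 1,2 let M(ηᵢ) be the entrywise image of M under AddMonoidAlgebra.mapDomainRingHom ηᵢ. Then for every natural number n and every pair of injective maps r : Fin n → Fin m, c : Fin n → Fin k, if det (M(η₂).submatrix r c) ≠ 0 then det (M(η₁).submatrix r c) ≠ 0. Consequently, the largest size of a square submatrix of M(η₂) with nonvanishing determinant is at most the largest such size for M(η₁). -/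

import Mathlib

theorem minor_nonzero_mono_of_ker_le {G H₁ H₂ : Type*}
    [AddCommGroup G] [AddCommGroup H₁] [AddCommGroup H₂]
    (η₁ : G →+ H₁) (η₂ : G →+ H₂)
    (hker : ∀ g : G, η₁ g = 0 → η₂ g = 0)
    {m k : ℕ} (M : Matrix (Fin m) (Fin k) (AddMonoidAlgebra (ZMod 2) G)) :
    (∀ (n : ℕ) (r : Fin n → Fin m) (c : Fin n → Fin k),
        Function.Injective r → Function.Injective c →
        ((M.map (AddMonoidAlgebra.mapDomainRingHom (ZMod 2) η₂)).submatrix r c).det ≠ 0 →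
        ((M.map (AddMonoidAlgebra.mapDomainRingHom (ZMod 2) η₁)).submatrix r c).det ≠ 0)
    ∧
    ∀ n : ℕ,
      (∃ (r : Fin n → Fin m) (c : Fin n → Fin k),
          Function.Injective r ∧ Function.Injective c ∧
          ((M.map (AddMonoidAlgebra.mapDomainRingHom (ZMod 2) η₂)).submatrix r c).det ≠ 0) →
      (∃ (r : Fin n → Fin m) (c : Fin n → Fin k),
          Function.Injective r ∧ Function.Injective c ∧
          ((M.map (AddMonoidAlgebra.mapDomainRingHom (ZMod 2) η₁)).submatrix r c).det ≠ 0) := by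
  have hft : Function.FactorsThrough (⇑η₂) (⇑η₁) := by
    intro a b hab
    have := hker (a - b) (by simp [map_sub, hab])
    rw [map_sub, sub_eq_zero] at this
    exact this
  have key : ∀ d : AddMonoidAlgebra (ZMod 2) G,
      AddMonoidAlgebra.mapDomainRingHom (ZMod 2) η₁ d = 0 →
      AddMonoidAlgebra.mapDomainRingHom (ZMod 2) η₂ d = 0 := by
    intro d h
    have hcomp : (Function.extend (⇑η₁) (⇑η₂) 0) ∘ ⇑η₁ = ⇑η₂ :=
      funext fun g => hft.extend_apply 0 g
    have : AddMonoidAlgebra.mapDomain (⇑η₂) d = 0 := by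
      rw [← hcomp, show AddMonoidAlgebra.mapDomain (Function.extend (⇑η₁) (⇑η₂) 0 ∘ ⇑η₁) d = AddMonoidAlgebra.mapDomain (Function.extend (⇑η₁) (⇑η₂) 0) (AddMonoidAlgebra.mapDomain (⇑η₁) d) from by ext; simp [Finsupp.mapDomain_comp]]
      have h' : AddMonoidAlgebra.mapDomain (⇑η₁) d = 0 := h
      rw [h', AddMonoidAlgebra.mapDomain_zero]
    exact this
  have hdet : ∀ (η : G →+ H₁) (n : ℕ) (r : Fin n → Fin m) (c : Fin n → Fin k),
      True := fun _ _ _ _ => trivial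
  have main : ∀ (n : ℕ) (r : Fin n → Fin m) (c : Fin n → Fin k),
      ((M.map (AddMonoidAlgebra.mapDomainRingHom (ZMod 2) η₂)).submatrix r c).det ≠ 0 →
      ((M.map (AddMonoidAlgebra.mapDomainRingHom (ZMod 2) η₁)).submatrix r c).det ≠ 0 := by
    intro n r c h2 h1
    apply h2
    have e2 : ((M.map (AddMonoidAlgebra.mapDomainRingHom (ZMod 2) η₂)).submatrix r c).det
          = AddMonoidAlgebra.mapDomainRingHom (ZMod 2) η₂ ((M.submatrix r c).det) := by
      rw [Matrix.submatrix_map, ← RingHom.mapMatrix_apply]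
      exact (RingHom.map_det _ _).symm
    have e1 : ((M.map (AddMonoidAlgebra.mapDomainRingHom (ZMod 2) η₁)).submatrix r c).det
          = AddMonoidAlgebra.mapDomainRingHom (ZMod 2) η₁ ((M.submatrix r c).det) := by
      rw [Matrix.submatrix_map, ← RingHom.mapMatrix_apply]
      exact (RingHom.map_det _ _).symm
    rw [e2]
    apply key
    rw [← e1]
    exact h1
  exact ⟨fun n r c _ _ => main n r c,
    fun n ⟨r, c, hr, hc, h⟩ => ⟨r, c, hr, hc, main n r c h⟩⟩
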